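/- arXiv:math/0111120 — 2 statements merged into one kernel-verified Lean document; each statement's English description precedes it below -/
import Mathlib

section
/- Let μ be a probability measure on [0,1] and define J(n,μ) = inf over polynomials p of degree ≤ n with p(0)=1 and p ≥ 0 on [0,1] of ∫₀¹ p dμ. Then for every n ∈ ℕ and z ∈ (0,1): J(n,μ) ≤ μ([0,z]) + 4e^(−2n√z). -/
open MeasureTheory

open Polynomial in
lemma natDegree_T_le : ∀ n : ℕ, (Polynomial.Chebyshev.T ℝ (n : ℤ)).natDegree ≤ n := by
  intro n
  induction n using Nat.strong_induction_on with
  | _ n ih =>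
    match n with
    | 0 => simp
    | 1 => simpa using Polynomial.natDegree_X_le
    | (m+2) =>
      have h : ((m+2 : ℕ) : ℤ) = (m : ℤ) + 2 := by push_cast; ring
      rw [h, Polynomial.Chebyshev.T_add_two]
      have h1 : (Polynomial.Chebyshev.T ℝ ((m : ℤ) + 1)).natDegree ≤ m + 1 := by
        have := ih (m+1) (by omega); push_cast at this ⊢; exact this
      have h2 : (Polynomial.Chebyshev.T ℝ (m : ℤ)).natDegree ≤ m := ih m (by omega)
      refine (Polynomial.natDegree_sub_le _ _).trans (max_le ?_ (h2.trans (by omega)))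
      calc (2 * Polynomial.X * Polynomial.Chebyshev.T ℝ ((m:ℤ)+1)).natDegree
          ≤ (2 * Polynomial.X : Polynomial ℝ).natDegree
            + (Polynomial.Chebyshev.T ℝ ((m:ℤ)+1)).natDegree :=
            Polynomial.natDegree_mul_le
        _ ≤ 1 + (m+1) := by
            refine add_le_add ?_ h1
            refine (Polynomial.natDegree_mul_le).trans ?_
            simpa using Polynomial.natDegree_X_le
        _ ≤ m + 2 := by omega


open Polynomial in
lemma exp_two_mul_le {u : ℝ} (hu0 : 0 ≤ u) : Real.exp (2*u) * (1 - u) ≤ 1 + u := by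
  have key : ∀ v : ℝ, HasDerivAt (fun w => Real.exp (-w) * (1 + w) - Real.exp w * (1 - w))
      (v * (Real.exp v - Real.exp (-v))) v := by
    intro v
    have h1 : HasDerivAt (fun w : ℝ => Real.exp (-w)) (-Real.exp (-v)) v := by
      simpa [Function.comp_def] using (Real.hasDerivAt_exp (-v)).comp v (hasDerivAt_neg v)
    have h2 : HasDerivAt (fun w : ℝ => (1 : ℝ) + w) 1 v := by
      simpa using (hasDerivAt_id v).const_add (1:ℝ)
    have h3 : HasDerivAt (fun w : ℝ => (1 : ℝ) - w) (-1) v := by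
      simpa using (hasDerivAt_id v).const_sub (1:ℝ)
    have := (h1.mul h2).sub ((Real.hasDerivAt_exp v).mul h3)
    refine this.congr_deriv ?_
    ring
  have mono : MonotoneOn (fun w => Real.exp (-w) * (1 + w) - Real.exp w * (1 - w))
      (Set.Ici (0:ℝ)) := by
    apply monotoneOn_of_deriv_nonneg (convex_Ici 0)
    · exact (Continuous.continuousOn (by continuity))
    · intro v _; exact (key v).differentiableAt.differentiableWithinAt
    · intro v hv
      rw [interior_Ici] at hv
      rw [(key v).deriv]
      have h := Real.exp_le_exp.2 (by linarith [hv.out.le] : -v ≤ v)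
      have := hv.out.le
      nlinarith
  have hh := mono (Set.mem_Ici.2 le_rfl) (Set.mem_Ici.2 hu0) hu0
  simp only [neg_zero, Real.exp_zero] at hh
  have hexp : Real.exp u * Real.exp (-u) = 1 := by rw [← Real.exp_add]; simp
  have h2u : Real.exp (2*u) = Real.exp u * Real.exp u := by rw [two_mul, Real.exp_add]
  nlinarith [Real.exp_pos u, Real.exp_pos (-u)]


open Polynomial in
lemma T_real_cosh' (n : ℤ) (s : ℝ) :
    (Polynomial.Chebyshev.T ℝ n).eval (Real.cosh s) = Real.cosh (n * s) := by
  apply Complex.ofReal_injective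
  rw [Polynomial.Chebyshev.complex_ofReal_eval_T, Complex.ofReal_cosh, Complex.ofReal_cosh,
    ← Complex.cos_mul_I, Polynomial.Chebyshev.T_complex_cos, ← Complex.cos_mul_I]
  congr 1
  push_cast
  ring

/-- `J(n,μ)` : infimum of `∫₀¹ p dμ` over polynomials `p` of degree at most `n`
with `p(0) = 1` and `p ≥ 0` on `[0,1]`. -/
noncomputable def J (n : ℕ) (μ : Measure ℝ) : ℝ :=
  sInf {r : ℝ | ∃ p : Polynomial ℝ, p.natDegree ≤ n ∧ p.eval 0 = 1 ∧
    (∀ x ∈ Set.Icc (0 : ℝ) 1, 0 ≤ p.eval x) ∧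
    r = ∫ x in Set.Icc (0 : ℝ) 1, p.eval x ∂μ}

theorem J_le_mu_add_exp (μ : Measure ℝ) [IsProbabilityMeasure μ]
    (hμ : μ (Set.Icc (0 : ℝ) 1)ᶜ = 0)
    (n : ℕ) (z : ℝ) (hz : z ∈ Set.Ioo (0 : ℝ) 1) :
    J n μ ≤ (μ (Set.Icc 0 z)).toReal + 4 * Real.exp (-2 * n * Real.sqrt z) := by
  obtain ⟨hz0, hz1⟩ := hz
  have hz1' : (0:ℝ) < 1 - z := by linarith
  set u := Real.sqrt z with hu_def
  have hu0 : 0 < u := Real.sqrt_pos.2 hz0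
  have huz : u^2 = z := Real.sq_sqrt hz0.le
  have hu1 : u < 1 := by nlinarith
  set a := (1+u)/(1-u) with ha_def
  have ha1 : 1 < a := by rw [ha_def, lt_div_iff₀ (by linarith)]; linarith
  set s := Real.log a with hs_def
  have hs0 : 0 < s := Real.log_pos ha1
  have hexps : Real.exp s = a := Real.exp_log (by linarith)
  set t0 := (1+z)/(1-z) with ht0_def
  have hcosh : Real.cosh s = t0 := by
    rw [Real.cosh_eq, hexps, Real.exp_neg, hexps, ht0_def, ← huz, ha_def]
    have h1 : (1:ℝ) - u ≠ 0 := by linarith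
    have h2 : (1:ℝ) + u ≠ 0 := by linarith
    have h3 : (1:ℝ) - u^2 ≠ 0 := by nlinarith
    field_simp
    ring
  set Tn : ℝ → ℝ := fun y => (Polynomial.Chebyshev.T ℝ (n:ℤ)).eval y with hTn_def
  have hT0 : Tn t0 = Real.cosh (n * s) := by
    show (Polynomial.Chebyshev.T ℝ (n:ℤ)).eval t0 = _
    rw [← hcosh, T_real_cosh']; norm_num
  have hT0one : 1 ≤ Tn t0 := by rw [hT0]; exact Real.one_le_cosh _
  have hT0pos : (0:ℝ) < Tn t0 + 1 := by linarith
  -- the polynomial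
  set c := 2/(1-z) with hc_def
  set q : Polynomial ℝ :=
    (Polynomial.Chebyshev.T ℝ (n:ℤ)).comp (Polynomial.C t0 - Polynomial.C c * Polynomial.X)
    with hq_def
  set p : Polynomial ℝ := Polynomial.C (Tn t0 + 1)⁻¹ * (q + 1) with hp_def
  have hqeval : ∀ x : ℝ, q.eval x = Tn (t0 - c * x) := by
    intro x; rw [hq_def]; simp [Polynomial.eval_comp, hTn_def]
  have hpeval : ∀ x : ℝ, p.eval x = (Tn t0 + 1)⁻¹ * (Tn (t0 - c * x) + 1) := by
    intro x; simp [hp_def, hqeval x]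
  have hy_eq : ∀ x : ℝ, t0 - c * x = (1 + z - 2*x)/(1-z) := by
    intro x; rw [ht0_def, hc_def]; field_simp
  have hp0 : p.eval 0 = 1 := by
    rw [hpeval 0]
    simp only [mul_zero, sub_zero]
    exact inv_mul_cancel₀ (ne_of_gt hT0pos)
  have hdeg : p.natDegree ≤ n := by
    rw [hp_def]
    refine (Polynomial.natDegree_C_mul_le _ _).trans ?_
    refine (Polynomial.natDegree_add_le _ _).trans ?_
    refine max_le ?_ (by simp)
    rw [hq_def]
    refine (Polynomial.natDegree_comp_le).trans ?_
    have h1 : (Polynomial.C t0 - Polynomial.C c * Polynomial.X).natDegree ≤ 1 :=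
      (Polynomial.natDegree_sub_le _ _).trans (max_le (by simp)
        ((Polynomial.natDegree_C_mul_le _ _).trans Polynomial.natDegree_X_le))
    calc (Polynomial.Chebyshev.T ℝ (n:ℤ)).natDegree
          * (Polynomial.C t0 - Polynomial.C c * Polynomial.X).natDegree
        ≤ n * 1 := Nat.mul_le_mul (natDegree_T_le n) h1
      _ = n := mul_one n
  -- pointwise bounds
  have hA : ∀ x ∈ Set.Icc (0:ℝ) z, 0 ≤ p.eval x ∧ p.eval x ≤ 1 := by
    intro x hx
    set y := t0 - c * x with hy_def
    have hy1 : 1 ≤ y := by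
      rw [hy_def, hy_eq, le_div_iff₀ hz1']; nlinarith [hx.2]
    have hyt : y ≤ t0 := by
      rw [hy_def, hy_eq, ht0_def, div_le_div_iff_of_pos_right hz1']; nlinarith [hx.1]
    obtain ⟨w, hw, hwy⟩ : ∃ w ∈ Set.Icc 0 s, Real.cosh w = y := by
      have := intermediate_value_Icc hs0.le Real.continuous_cosh.continuousOn
      have hmem : y ∈ Set.Icc (Real.cosh 0) (Real.cosh s) := by
        rw [Real.cosh_zero, hcosh]; exact ⟨hy1, hyt⟩
      exact this hmem
    have hTy : Tn y = Real.cosh (n * w) := by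
      show (Polynomial.Chebyshev.T ℝ (n:ℤ)).eval y = _
      rw [← hwy, T_real_cosh']; norm_num
    have h1 : 1 ≤ Tn y := by rw [hTy]; exact Real.one_le_cosh _
    have h2 : Tn y ≤ Tn t0 := by
      rw [hTy, hT0]
      rw [Real.cosh_le_cosh]
      rw [abs_of_nonneg (mul_nonneg (Nat.cast_nonneg n) hw.1),
        abs_of_nonneg (mul_nonneg (Nat.cast_nonneg n) hs0.le)]
      exact mul_le_mul_of_nonneg_left hw.2 (Nat.cast_nonneg n)
    constructor
    · rw [hpeval x, ← hy_def]; exact mul_nonneg (by positivity) (by linarith)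
    · rw [hpeval x, ← hy_def, inv_mul_le_one₀ hT0pos]; linarith
  have hB : ∀ x ∈ Set.Icc z (1:ℝ), 0 ≤ p.eval x ∧ p.eval x ≤ 2 * (Tn t0 + 1)⁻¹ := by
    intro x hx
    set y := t0 - c * x with hy_def
    have hym : -1 ≤ y := by
      rw [hy_def, hy_eq, le_div_iff₀ hz1']; nlinarith [hx.2]
    have hy1 : y ≤ 1 := by
      rw [hy_def, hy_eq, div_le_one hz1']; nlinarith [hx.1]
    have hTy : Tn y = Real.cos (n * Real.arccos y) := by
      have h := Polynomial.Chebyshev.T_real_cos (Real.arccos y) (n:ℤ)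
      rw [Real.cos_arccos hym hy1] at h
      show (Polynomial.Chebyshev.T ℝ (n:ℤ)).eval y = _
      rw [h]; norm_num
    have h1 : -1 ≤ Tn y := by rw [hTy]; exact Real.neg_one_le_cos _
    have h2 : Tn y ≤ 1 := by rw [hTy]; exact Real.cos_le_one _
    constructor
    · rw [hpeval x, ← hy_def]; exact mul_nonneg (by positivity) (by linarith)
    · rw [hpeval x, ← hy_def, mul_comm (2:ℝ)]
      exact mul_le_mul_of_nonneg_left (by linarith) (by positivity)
  have hT0ge : Real.exp (2*(n:ℝ)*u) / 2 ≤ Tn t0 := by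
    have hea : Real.exp (2*u) ≤ a := by
      rw [ha_def, le_div_iff₀ (by linarith)]
      exact exp_two_mul_le hu0.le
    have h1 : Real.exp (2*(n:ℝ)*u) = (Real.exp (2*u))^n := by
      rw [← Real.exp_nat_mul]; ring_nf
    have h2 : Real.exp ((n:ℝ)*s) = a^n := by rw [Real.exp_nat_mul, hexps]
    have h3 : (Real.exp (2*u))^n ≤ a^n := pow_le_pow_left₀ (Real.exp_pos _).le hea n
    have h4 : Real.cosh ((n:ℝ)*s) = (Real.exp ((n:ℝ)*s) + Real.exp (-((n:ℝ)*s)))/2 :=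
      Real.cosh_eq _
    rw [hT0, h4, h2, h1]
    have := (Real.exp_pos (-((n:ℝ)*s))).le
    linarith
  have hM : 2 * (Tn t0 + 1)⁻¹ ≤ 4 * Real.exp (-2*(n:ℝ)*u) := by
    have hpos : (0:ℝ) < Real.exp (2*(n:ℝ)*u) / 2 := by positivity
    have hinv : (Tn t0 + 1)⁻¹ ≤ (Real.exp (2*(n:ℝ)*u)/2)⁻¹ := by
      apply inv_anti₀ hpos; linarith
    have heq : (Real.exp (2*(n:ℝ)*u)/2)⁻¹ = 2 * Real.exp (-2*(n:ℝ)*u) := by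
      rw [show (-2*(n:ℝ)*u) = -(2*(n:ℝ)*u) by ring, Real.exp_neg]
      field_simp
    rw [heq] at hinv
    linarith
  have hM0 : (0:ℝ) ≤ 2 * (Tn t0 + 1)⁻¹ := by positivity
  -- nonnegativity on [0,1]
  have hnonneg : ∀ x ∈ Set.Icc (0:ℝ) 1, 0 ≤ p.eval x := by
    intro x hx
    rcases le_or_gt x z with h | h
    · exact (hA x ⟨hx.1, h⟩).1
    · exact (hB x ⟨h.le, hx.2⟩).1
  -- J ≤ integral of p
  have hJle : J n μ ≤ ∫ x in Set.Icc (0:ℝ) 1, p.eval x ∂μ := by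
    apply csInf_le
    · refine ⟨0, ?_⟩
      rintro r ⟨p', -, -, hpos', rfl⟩
      exact setIntegral_nonneg measurableSet_Icc hpos'
    · exact ⟨p, hdeg, hp0, hnonneg, rfl⟩
  -- split the integral
  have hsplit : Set.Icc (0:ℝ) 1 = Set.Icc 0 z ∪ Set.Ioc z 1 :=
    (Set.Icc_union_Ioc_eq_Icc hz0.le hz1.le).symm
  have hdisj : Disjoint (Set.Icc (0:ℝ) z) (Set.Ioc z 1) :=
    Set.disjoint_left.2 fun x hx1 hx2 => absurd hx1.2 (not_le.2 hx2.1)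
  have hint1 : IntegrableOn (fun x => p.eval x) (Set.Icc (0:ℝ) z) μ :=
    p.continuous.integrableOn_Icc
  have hint2 : IntegrableOn (fun x => p.eval x) (Set.Ioc z (1:ℝ)) μ :=
    p.continuous.integrableOn_Ioc
  have hb1 : ∫ x in Set.Icc (0:ℝ) z, p.eval x ∂μ ≤ (μ (Set.Icc 0 z)).toReal := by
    have hnorm := norm_setIntegral_le_of_norm_le_const_ae' (C := 1)
      (measure_lt_top μ _)
      (Filter.Eventually.of_forall fun x (hx : x ∈ Set.Icc (0:ℝ) z) => by
        rw [Real.norm_eq_abs]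
        exact abs_le.2 ⟨by linarith [(hA x hx).1], (hA x hx).2⟩)
    rw [one_mul] at hnorm
    exact (le_abs_self _).trans hnorm
  have hb2 : ∫ x in Set.Ioc z (1:ℝ), p.eval x ∂μ ≤ 2 * (Tn t0 + 1)⁻¹ := by
    have hnorm := norm_setIntegral_le_of_norm_le_const_ae' (C := 2 * (Tn t0 + 1)⁻¹)
      (measure_lt_top μ _)
      (Filter.Eventually.of_forall fun x (hx : x ∈ Set.Ioc z (1:ℝ)) => by
        have hx' : x ∈ Set.Icc z (1:ℝ) := ⟨hx.1.le, hx.2⟩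
        rw [Real.norm_eq_abs]
        exact abs_le.2 ⟨by linarith [(hB x hx').1, hM0], (hB x hx').2⟩)
    have htr : (μ (Set.Ioc z (1:ℝ))).toReal ≤ 1 := by
      have := ENNReal.toReal_mono ENNReal.one_ne_top (prob_le_one (μ := μ) (s := Set.Ioc z 1))
      simpa using this
    have := (le_abs_self _).trans hnorm
    calc ∫ x in Set.Ioc z (1:ℝ), p.eval x ∂μ
        ≤ 2 * (Tn t0 + 1)⁻¹ * (μ (Set.Ioc z 1)).toReal := this
      _ ≤ 2 * (Tn t0 + 1)⁻¹ * 1 := mul_le_mul_of_nonneg_left htr hM0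
      _ = 2 * (Tn t0 + 1)⁻¹ := mul_one _
  have hsum : ∫ x in Set.Icc (0:ℝ) 1, p.eval x ∂μ
      = (∫ x in Set.Icc (0:ℝ) z, p.eval x ∂μ) + ∫ x in Set.Ioc z (1:ℝ), p.eval x ∂μ := by
    rw [hsplit]
    exact setIntegral_union hdisj measurableSet_Ioc hint1 hint2
  have hfin : J n μ ≤ (μ (Set.Icc 0 z)).toReal + 2 * (Tn t0 + 1)⁻¹ := by
    rw [hsum] at hJle
    linarith
  refine hfin.trans ?_
  have : -2*(n:ℝ)*Real.sqrt z = -2*(n:ℝ)*u := by rw [hu_def]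
  rw [this]
  linarith
end

section
/- Let μ be a probability measure on [0,1] with μ([0,x]) ≤ C·x^β for all x ∈ (0,1], where C > 0 and β > 0. Then there is a constant C' > 0 (depending only on C and β) such that for all n ≥ 2, J(n,μ) ≤ C'·(log n / n)^(2β). -/
open MeasureTheory Polynomial
open scoped ENNReal

lemma chebDeg : ∀ m : ℕ, (Chebyshev.T ℝ (m : ℤ)).natDegree ≤ m ∧
    (Chebyshev.T ℝ ((m : ℤ) + 1)).natDegree ≤ m + 1 := by
  intro m
  induction m with
  | zero => simp [Chebyshev.T_zero, Chebyshev.T_one, Polynomial.natDegree_X_le]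
  | succ k ih =>
    refine ⟨by exact_mod_cast ih.2, ?_⟩
    have h : ((k : ℤ) + 1) + 1 = (k : ℤ) + 2 := by ring
    rw [show ((k+1 : ℕ) : ℤ) + 1 = (k : ℤ) + 2 by push_cast; ring, Chebyshev.T_add_two]
    refine (natDegree_sub_le _ _).trans (max_le ?_ (ih.1.trans (by omega)))
    refine (natDegree_mul_le).trans ?_
    have h2 : (2 * X : ℝ[X]).natDegree ≤ 1 :=
      natDegree_mul_le.trans (by simp [Polynomial.natDegree_X_le])
    have := ih.2
    omega

lemma chebCosh (m : ℤ) (t : ℝ) :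
    (Chebyshev.T ℝ m).eval (Real.cosh t) = Real.cosh (m * t) := by
  apply Complex.ofReal_injective
  rw [Chebyshev.complex_ofReal_eval_T, Complex.ofReal_cosh, ← Complex.cos_mul_I,
    Chebyshev.T_complex_cos, Complex.ofReal_cosh, ← Complex.cos_mul_I]
  congr 1
  push_cast
  ring

lemma chebAbsLe (m : ℤ) {y : ℝ} (h1 : -1 ≤ y) (h2 : y ≤ 1) :
    |(Chebyshev.T ℝ m).eval y| ≤ 1 := by
  rw [← Real.cos_arccos h1 h2, Chebyshev.T_real_cos]
  exact Real.abs_cos_le_one _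

lemma exists_cosh {y : ℝ} (hy : 1 ≤ y) : ∃ t : ℝ, 0 ≤ t ∧ Real.cosh t = y := by
  have hy2 : (0:ℝ) ≤ y ^ 2 - 1 := by nlinarith
  set s := Real.sqrt (y ^ 2 - 1) with hs
  have hs0 : 0 ≤ s := Real.sqrt_nonneg _
  have hssq : s ^ 2 = y ^ 2 - 1 := Real.sq_sqrt hy2
  have ha1 : 1 ≤ y + s := by linarith
  have hap : 0 < y + s := by linarith
  refine ⟨Real.log (y + s), Real.log_nonneg ha1, ?_⟩
  have hinv : (y + s)⁻¹ = y - s := by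
    have : (y + s) * (y - s) = 1 := by nlinarith
    field_simp
    nlinarith
  rw [Real.cosh_eq, Real.exp_log hap, Real.exp_neg, Real.exp_log hap, hinv]
  ring

lemma cosh_sqrt_le {z : ℝ} (h0 : 0 ≤ z) (h1 : z < 1) :
    Real.cosh (Real.sqrt z) ≤ (1 + z) / (1 - z) := by
  set v := Real.sqrt z with hv
  have hv0 : 0 ≤ v := Real.sqrt_nonneg _
  have hv1 : v ≤ 1 := Real.sqrt_le_one.mpr h1.le
  have hvsq : v ^ 2 = z := Real.sq_sqrt h0
  have habs : |v| ≤ 1 := by rw [abs_of_nonneg hv0]; exact hv1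
  have hb1 := Real.exp_bound habs (by norm_num : 0 < 2)
  have habs' : |(-v)| ≤ 1 := by rwa [abs_neg]
  have hb2 := Real.exp_bound habs' (by norm_num : 0 < 2)
  simp only [Finset.sum_range_succ, Finset.sum_range_zero] at hb1 hb2
  norm_num at hb1 hb2
  rw [abs_le] at hb1 hb2
  have he1 : Real.exp v ≤ 1 + v + (3/4) * v ^ 2 := by nlinarith [hb1.2]
  have he2 : Real.exp (-v) ≤ 1 - v + (3/4) * v ^ 2 := by nlinarith [hb2.2]
  have hcosh : Real.cosh v ≤ 1 + (3/4) * z := by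
    rw [Real.cosh_eq]
    nlinarith
  have h1z : 0 < 1 - z := by linarith
  refine hcosh.trans ?_
  rw [le_div_iff₀ h1z]
  nlinarith

lemma J_key (μ : Measure ℝ) [IsProbabilityMeasure μ] {z : ℝ} (hz0 : 0 < z) (hz1 : z < 1)
    (n m : ℕ) (hm : 2 * m ≤ n) :
    J n μ ≤ (μ (Set.Icc 0 z)).toReal + 4 * Real.exp (-(2 * (m : ℝ)) * Real.sqrt z) := by
  have h1z : (0:ℝ) < 1 - z := by linarith
  set s0 : ℝ := (1 + z) / (1 - z) with hs0def
  have hs0 : 1 ≤ s0 := by rw [le_div_iff₀ h1z]; linarith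
  obtain ⟨t0, ht0, hcosh0⟩ := exists_cosh hs0
  set Q : ℝ[X] := (Chebyshev.T ℝ (m : ℤ)).comp (C s0 - C (2 / (1 - z)) * X) with hQdef
  have hQeval : ∀ x : ℝ, Q.eval x = (Chebyshev.T ℝ (m : ℤ)).eval ((1 + z - 2 * x) / (1 - z)) := by
    intro x
    rw [hQdef, eval_comp]
    congr 1
    simp only [eval_sub, eval_mul, eval_C, eval_X, hs0def]
    field_simp
  set D : ℝ := Real.cosh ((m : ℝ) * t0) with hDdef
  have hD1 : 1 ≤ D := Real.one_le_cosh _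
  have hD0 : 0 < D := by linarith
  have hQ0 : Q.eval 0 = D := by
    rw [hQeval]
    have : (1 + z - 2 * 0) / (1 - z) = s0 := by rw [hs0def]; ring
    rw [this, ← hcosh0, chebCosh]
    push_cast
    rfl
  set P : ℝ[X] := (C D⁻¹ * Q) ^ 2 with hPdef
  have hPeval : ∀ x : ℝ, P.eval x = (D⁻¹ * Q.eval x) ^ 2 := by
    intro x; rw [hPdef]; simp
  -- degree
  have hdeg : P.natDegree ≤ n := by
    have hlin : (C s0 - C (2 / (1 - z)) * X : ℝ[X]).natDegree ≤ 1 := by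
      refine (natDegree_sub_le _ _).trans (max_le (by simp) ?_)
      exact natDegree_mul_le.trans (by simp [Polynomial.natDegree_X_le])
    have hQdeg : Q.natDegree ≤ m := by
      refine natDegree_comp_le.trans ?_
      calc (Chebyshev.T ℝ (m : ℤ)).natDegree * (C s0 - C (2 / (1 - z)) * X).natDegree
          ≤ m * 1 := Nat.mul_le_mul (chebDeg m).1 hlin
        _ = m := by omega
    refine natDegree_pow_le.trans ?_
    have : (C D⁻¹ * Q).natDegree ≤ m := (natDegree_mul_le).trans (by simpa using hQdeg)
    omega
  -- eval at 0
  have hP0 : P.eval 0 = 1 := by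
    rw [hPeval, hQ0, inv_mul_cancel₀ (by linarith)]; norm_num
  -- nonneg
  have hPnonneg : ∀ x : ℝ, 0 ≤ P.eval x := fun x => by rw [hPeval]; positivity
  -- bound on [0,z]
  have hbound1 : ∀ x ∈ Set.Icc (0:ℝ) z, P.eval x ≤ 1 := by
    intro x hx
    obtain ⟨hx0, hxz⟩ := hx
    set y : ℝ := (1 + z - 2 * x) / (1 - z) with hydef
    have hy1 : 1 ≤ y := by rw [hydef, le_div_iff₀ h1z]; linarith
    have hys0 : y ≤ s0 := by
      rw [hydef, hs0def, div_le_div_iff_of_pos_right h1z]; linarith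
    obtain ⟨u, hu0, hcoshu⟩ := exists_cosh hy1
    have hut0 : u ≤ t0 := by
      have : Real.cosh u ≤ Real.cosh t0 := by rw [hcoshu, hcosh0]; exact hys0
      have := Real.cosh_le_cosh.mp this
      rwa [abs_of_nonneg hu0, abs_of_nonneg ht0] at this
    have hTle : Q.eval x ≤ D := by
      rw [hQeval, ← hydef, ← hcoshu, chebCosh, hDdef]
      rw [show ((m:ℤ):ℝ) = (m:ℝ) by push_cast; rfl]
      refine Real.cosh_le_cosh.mpr ?_
      rw [abs_of_nonneg (by positivity), abs_of_nonneg (by positivity)]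
      exact mul_le_mul_of_nonneg_left hut0 (by positivity)
    have hTpos : 0 ≤ Q.eval x := by
      rw [hQeval, ← hydef, ← hcoshu, chebCosh]
      exact (Real.cosh_pos _).le
    rw [hPeval]
    have h1 : D⁻¹ * Q.eval x ≤ 1 := by
      rw [inv_mul_le_iff₀ hD0]; simpa using hTle
    have h0 : 0 ≤ D⁻¹ * Q.eval x := by positivity
    nlinarith
  -- bound on [z,1]
  have hbound2 : ∀ x ∈ Set.Ioc z (1:ℝ), P.eval x ≤ 4 * Real.exp (-(2 * (m:ℝ)) * Real.sqrt z) := by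
    intro x hx
    obtain ⟨hxz, hx1⟩ := hx
    set y : ℝ := (1 + z - 2 * x) / (1 - z) with hydef
    have hy1 : y ≤ 1 := by rw [hydef, div_le_one h1z]; linarith
    have hy2 : -1 ≤ y := by rw [hydef, le_div_iff₀ h1z]; linarith
    have hT : |Q.eval x| ≤ 1 := by rw [hQeval, ← hydef]; exact chebAbsLe _ hy2 hy1
    -- D ≥ exp(m t0)/2
    have hDge : Real.exp ((m:ℝ) * t0) / 2 ≤ D := by
      rw [hDdef, Real.cosh_eq]
      have : 0 < Real.exp (-((m:ℝ) * t0)) := Real.exp_pos _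
      linarith
    have hsqz : Real.sqrt z ≤ t0 := by
      have hc : Real.cosh (Real.sqrt z) ≤ Real.cosh t0 := by
        rw [hcosh0]; exact cosh_sqrt_le hz0.le hz1
      have := Real.cosh_le_cosh.mp hc
      rwa [abs_of_nonneg (Real.sqrt_nonneg _), abs_of_nonneg ht0] at this
    rw [hPeval]
    have hEpos : 0 < Real.exp ((m:ℝ) * t0) := Real.exp_pos _
    have hQsq : (Q.eval x) ^ 2 ≤ 1 := by
      obtain ⟨ha, hb⟩ := abs_le.mp hT
      nlinarith
    have h2 : (D⁻¹ * Q.eval x) ^ 2 ≤ D⁻¹ ^ 2 := by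
      rw [mul_pow]
      nlinarith [sq_nonneg D⁻¹]
    refine h2.trans ?_
    have hinv : D⁻¹ ≤ (Real.exp ((m:ℝ) * t0) / 2)⁻¹ := by
      exact inv_anti₀ (by positivity) hDge
    have h4 : ((Real.exp ((m:ℝ) * t0) / 2)⁻¹) ^ 2 = 4 * Real.exp (-(2 * (m:ℝ)) * t0) := by
      rw [show -(2 * (m:ℝ)) * t0 = -((m:ℝ) * t0) + -((m:ℝ) * t0) by ring, Real.exp_add,
        Real.exp_neg]
      field_simp
      ring
    calc D⁻¹ ^ 2 ≤ ((Real.exp ((m:ℝ) * t0) / 2)⁻¹) ^ 2 :=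
          pow_le_pow_left₀ (by positivity) hinv 2
      _ = 4 * Real.exp (-(2 * (m:ℝ)) * t0) := h4
      _ ≤ 4 * Real.exp (-(2 * (m:ℝ)) * Real.sqrt z) := by
          have hmn : (0:ℝ) ≤ 2 * (m:ℝ) := by positivity
          have hh : -(2 * (m:ℝ)) * t0 ≤ -(2 * (m:ℝ)) * Real.sqrt z := by
            have := mul_le_mul_of_nonneg_left hsqz hmn
            linarith
          have := Real.exp_le_exp.mpr hh
          linarith
  -- the integral bound
  have hcont : Continuous fun x : ℝ => P.eval x := P.continuous_aeval
  have hint1 : IntegrableOn (fun x : ℝ => P.eval x) (Set.Icc 0 z) μ :=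
    hcont.integrableOn_Icc
  have hint2 : IntegrableOn (fun x : ℝ => P.eval x) (Set.Ioc z 1) μ :=
    hcont.integrableOn_Ioc
  have hsplit : Set.Icc (0:ℝ) 1 = Set.Icc 0 z ∪ Set.Ioc z 1 :=
    (Set.Icc_union_Ioc_eq_Icc hz0.le hz1.le).symm
  have hdisj : Disjoint (Set.Icc (0:ℝ) z) (Set.Ioc z 1) := by
    rw [Set.disjoint_left]
    rintro a ⟨_, h1⟩ ⟨h2, _⟩
    exact absurd h1 (not_le.mpr h2)
  have hIeq : ∫ x in Set.Icc (0:ℝ) 1, P.eval x ∂μ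
      = (∫ x in Set.Icc (0:ℝ) z, P.eval x ∂μ) + ∫ x in Set.Ioc z 1, P.eval x ∂μ := by
    rw [hsplit, setIntegral_union hdisj measurableSet_Ioc hint1 hint2]
  have habs1 : ∫ x in Set.Icc (0:ℝ) z, P.eval x ∂μ ≤ 1 * (μ (Set.Icc 0 z)).toReal := by
    refine le_trans (le_abs_self _) ?_
    rw [← Real.norm_eq_abs]
    refine norm_setIntegral_le_of_norm_le_const (measure_lt_top μ _) ?_
    · intro x hx
      rw [Real.norm_eq_abs, abs_of_nonneg (hPnonneg x)]
      exact hbound1 x hx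
  have habs2 : ∫ x in Set.Ioc z (1:ℝ), P.eval x ∂μ
      ≤ (4 * Real.exp (-(2 * (m:ℝ)) * Real.sqrt z)) * (μ (Set.Ioc z 1)).toReal := by
    refine le_trans (le_abs_self _) ?_
    rw [← Real.norm_eq_abs]
    refine norm_setIntegral_le_of_norm_le_const (measure_lt_top μ _) ?_
    · intro x hx
      rw [Real.norm_eq_abs, abs_of_nonneg (hPnonneg x)]
      exact hbound2 x hx
  have hmeas_le : (μ (Set.Ioc z (1:ℝ))).toReal ≤ 1 := by
    have := prob_le_one (μ := μ) (s := Set.Ioc z 1)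
    calc (μ (Set.Ioc z (1:ℝ))).toReal ≤ (1 : ℝ≥0∞).toReal :=
          ENNReal.toReal_mono (by simp) this
      _ = 1 := by simp
  -- membership in the set
  have hmem : (∫ x in Set.Icc (0:ℝ) 1, P.eval x ∂μ) ∈
      {r : ℝ | ∃ p : Polynomial ℝ, p.natDegree ≤ n ∧ p.eval 0 = 1 ∧
        (∀ x ∈ Set.Icc (0 : ℝ) 1, 0 ≤ p.eval x) ∧
        r = ∫ x in Set.Icc (0 : ℝ) 1, p.eval x ∂μ} :=
    ⟨P, hdeg, hP0, fun x _ => hPnonneg x, rfl⟩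
  have hbdd : BddBelow {r : ℝ | ∃ p : Polynomial ℝ, p.natDegree ≤ n ∧ p.eval 0 = 1 ∧
      (∀ x ∈ Set.Icc (0 : ℝ) 1, 0 ≤ p.eval x) ∧
      r = ∫ x in Set.Icc (0 : ℝ) 1, p.eval x ∂μ} := by
    refine ⟨0, ?_⟩
    rintro r ⟨p, _, _, hp, rfl⟩
    exact setIntegral_nonneg measurableSet_Icc hp
  have hJle : J n μ ≤ ∫ x in Set.Icc (0:ℝ) 1, P.eval x ∂μ := csInf_le hbdd hmem
  have hexp4 : 0 < 4 * Real.exp (-(2 * (m:ℝ)) * Real.sqrt z) := by positivity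
  calc J n μ ≤ ∫ x in Set.Icc (0:ℝ) 1, P.eval x ∂μ := hJle
    _ = (∫ x in Set.Icc (0:ℝ) z, P.eval x ∂μ) + ∫ x in Set.Ioc z 1, P.eval x ∂μ := hIeq
    _ ≤ 1 * (μ (Set.Icc 0 z)).toReal
        + (4 * Real.exp (-(2 * (m:ℝ)) * Real.sqrt z)) * (μ (Set.Ioc z 1)).toReal :=
          add_le_add habs1 habs2
    _ ≤ (μ (Set.Icc 0 z)).toReal + 4 * Real.exp (-(2 * (m:ℝ)) * Real.sqrt z) := by
          rw [one_mul]
          have h1 := hmeas_le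
          have h2 : (0:ℝ) ≤ (μ (Set.Ioc z (1:ℝ))).toReal := ENNReal.toReal_nonneg
          nlinarith

set_option maxHeartbeats 1600000 in
/-- Polynomial power law decay of `μ` near `0` gives `J(n,μ) ≤ C'(log n / n)^(2β)`. -/
theorem J_le_of_power_decay (μ : Measure ℝ) [IsProbabilityMeasure μ]
    (hμ : μ (Set.Icc (0 : ℝ) 1)ᶜ = 0)
    (C β : ℝ) (hC : 0 < C) (hβ : 0 < β)
    (hdecay : ∀ x ∈ Set.Ioc (0 : ℝ) 1, (μ (Set.Icc 0 x)).toReal ≤ C * x ^ β) :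
    ∃ C' > 0, ∀ n : ℕ, 2 ≤ n →
      J n μ ≤ C' * (Real.log n / n) ^ (2 * β) := by
  set K : ℝ := 4 * β + 4 with hKdef
  have hK : 0 < K := by positivity
  have hlog2 : 0 < Real.log 2 := Real.log_pos (by norm_num)
  set C' : ℝ := C * K ^ (2 * β) + (Real.log 2) ^ (-(2 * β))
      + (C + 4) * (Real.sqrt 2 * K) ^ (2 * β) with hC'def
  have hsqrt2 : 0 < Real.sqrt 2 := Real.sqrt_pos.mpr (by norm_num)
  have hC' : 0 < C' := by positivity
  refine ⟨C', hC', fun n hn => ?_⟩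
  have hnpos : (0:ℝ) < n := by positivity
  have hn2 : (2:ℝ) ≤ n := by exact_mod_cast hn
  set L : ℝ := Real.log n with hLdef
  have hL2 : Real.log 2 ≤ L := Real.log_le_log (by norm_num) hn2
  have hL : 0 < L := lt_of_lt_of_le hlog2 hL2
  set a : ℝ := K * L / n with hadef
  have ha : 0 < a := by positivity
  have hLn : 0 < L / n := by positivity
  have hmn : 2 * (n / 2) ≤ n := by omega
  have h4m : (n:ℝ) / 2 ≤ 2 * ((n / 2 : ℕ) : ℝ) := by
    have : n ≤ 4 * (n / 2) := by omega
    have h' : (n:ℝ) ≤ 4 * ((n / 2 : ℕ) : ℝ) := by exact_mod_cast this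
    linarith
  have h2β : (0:ℝ) ≤ 2 * β := by positivity
  have hmulrw : a = K * (L / n) := by rw [hadef]; ring
  -- (L/n)^(2β) nonneg
  have hLn2β : 0 < (L / n) ^ (2 * β) := Real.rpow_pos_of_pos hLn _
  by_cases hcase : a ^ 2 ≤ 1 / 2
  · -- main case
    set z : ℝ := a ^ 2 with hzdef
    have hz0 : 0 < z := by positivity
    have hz1 : z < 1 := lt_of_le_of_lt hcase (by norm_num)
    have hkey := J_key μ hz0 hz1 n (n / 2) hmn
    have hsqrtz : Real.sqrt z = a := by rw [hzdef]; exact Real.sqrt_sq ha.le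
    rw [hsqrtz] at hkey
    have hterm1 : (μ (Set.Icc 0 z)).toReal ≤ C * (K ^ (2 * β) * (L / n) ^ (2 * β)) := by
      refine (hdecay z ⟨hz0, hz1.le⟩).trans ?_
      have hz : z ^ β = a ^ (2 * β) := by
        rw [hzdef, ← Real.rpow_natCast a 2, ← Real.rpow_mul ha.le]
        norm_num
      rw [hz, hmulrw, Real.mul_rpow hK.le hLn.le]
    have hterm2 : 4 * Real.exp (-(2 * ((n / 2 : ℕ) : ℝ)) * a)
        ≤ (Real.log 2) ^ (-(2 * β)) * (L / n) ^ (2 * β) := by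
      have step1 : -(2 * ((n / 2 : ℕ) : ℝ)) * a ≤ -(2 * β + 2) * L := by
        have h1 : ((n:ℝ) / 2) * a ≤ (2 * ((n / 2 : ℕ) : ℝ)) * a :=
          mul_le_mul_of_nonneg_right h4m ha.le
        have h2 : ((n:ℝ) / 2) * a = (2 * β + 2) * L := by
          rw [hadef, hKdef]
          field_simp
          ring
        linarith
      have step2 : Real.exp (-(2 * β + 2) * L) = (n:ℝ) ^ (-(2 * β + 2)) := by
        rw [Real.rpow_def_of_pos hnpos, hLdef]
        ring_nf
      have step3 : (n:ℝ) ^ (-(2 * β + 2)) = (n:ℝ) ^ (-(2 * β)) * (n:ℝ) ^ (-(2:ℝ)) := by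
        rw [← Real.rpow_add hnpos]
        ring_nf
      have step4 : (n:ℝ) ^ (-(2:ℝ)) ≤ 1 / 4 := by
        rw [Real.rpow_neg hnpos.le]
        rw [show ((2:ℝ)) = ((2:ℕ):ℝ) by norm_num, Real.rpow_natCast]
        have h4 : (4:ℝ) ≤ (n:ℝ) ^ (2:ℕ) := by nlinarith
        rw [inv_le_comm₀ (by positivity) (by norm_num)]
        linarith
      have step5 : (n:ℝ) ^ (-(2 * β)) ≤ (Real.log 2) ^ (-(2 * β)) * (L / n) ^ (2 * β) := by
        have hlhs : (Real.log 2) ^ (2 * β) * (n:ℝ) ^ (-(2 * β)) ≤ (L / n) ^ (2 * β) := by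
          rw [Real.div_rpow hL.le hnpos.le, Real.rpow_neg hnpos.le, div_eq_mul_inv]
          exact mul_le_mul_of_nonneg_right
            (Real.rpow_le_rpow hlog2.le hL2 h2β) (by positivity)
        have hpos : (0:ℝ) < (Real.log 2) ^ (2 * β) := Real.rpow_pos_of_pos hlog2 _
        have hco : (Real.log 2) ^ (-(2 * β)) * (Real.log 2) ^ (2 * β) = 1 := by
          rw [← Real.rpow_add hlog2]
          norm_num
        calc (n:ℝ) ^ (-(2 * β))
            = (Real.log 2) ^ (-(2 * β)) * ((Real.log 2) ^ (2 * β) * (n:ℝ) ^ (-(2 * β))) := by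
              rw [← mul_assoc, hco, one_mul]
          _ ≤ (Real.log 2) ^ (-(2 * β)) * (L / n) ^ (2 * β) :=
              mul_le_mul_of_nonneg_left hlhs (by positivity)
      have hexp_pos : 0 < (n:ℝ) ^ (-(2 * β)) := Real.rpow_pos_of_pos hnpos _
      calc 4 * Real.exp (-(2 * ((n / 2 : ℕ) : ℝ)) * a)
          ≤ 4 * Real.exp (-(2 * β + 2) * L) := by
            have := Real.exp_le_exp.mpr step1
            linarith
        _ = 4 * ((n:ℝ) ^ (-(2 * β)) * (n:ℝ) ^ (-(2:ℝ))) := by rw [step2, step3]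
        _ ≤ 4 * ((n:ℝ) ^ (-(2 * β)) * (1 / 4)) := by
            refine mul_le_mul_of_nonneg_left ?_ (by norm_num)
            exact mul_le_mul_of_nonneg_left step4 hexp_pos.le
        _ = (n:ℝ) ^ (-(2 * β)) := by ring
        _ ≤ (Real.log 2) ^ (-(2 * β)) * (L / n) ^ (2 * β) := step5
    have hrest : 0 ≤ (C + 4) * (Real.sqrt 2 * K) ^ (2 * β) * (L / n) ^ (2 * β) := by positivity
    calc J n μ ≤ (μ (Set.Icc 0 z)).toReal + 4 * Real.exp (-(2 * ((n / 2 : ℕ) : ℝ)) * a) := hkey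
      _ ≤ C * (K ^ (2 * β) * (L / n) ^ (2 * β))
          + (Real.log 2) ^ (-(2 * β)) * (L / n) ^ (2 * β) := add_le_add hterm1 hterm2
      _ ≤ C' * (L / n) ^ (2 * β) := by
          have e1 : C' * (L / n) ^ (2 * β)
              = C * (K ^ (2 * β) * (L / n) ^ (2 * β))
                + (Real.log 2) ^ (-(2 * β)) * (L / n) ^ (2 * β)
                + (C + 4) * (Real.sqrt 2 * K) ^ (2 * β) * (L / n) ^ (2 * β) := by
            rw [hC'def]; ring
          linarith [hrest]
  · -- degenerate case : a^2 > 1/2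
    push_neg at hcase
    have hkey := J_key μ (z := 1/2) (by norm_num) (by norm_num) n (n / 2) hmn
    have hterm1 : (μ (Set.Icc 0 (1/2 : ℝ))).toReal ≤ C := by
      refine (hdecay (1/2) ⟨by norm_num, by norm_num⟩).trans ?_
      have : ((1:ℝ)/2) ^ β ≤ 1 := Real.rpow_le_one (by norm_num) (by norm_num) hβ.le
      nlinarith
    have hterm2 : 4 * Real.exp (-(2 * ((n / 2 : ℕ) : ℝ)) * Real.sqrt (1/2)) ≤ 4 := by
      have hle : -(2 * ((n / 2 : ℕ) : ℝ)) * Real.sqrt (1/2) ≤ 0 := by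
        have h1 : (0:ℝ) ≤ 2 * ((n / 2 : ℕ) : ℝ) := by positivity
        have h2 : (0:ℝ) ≤ Real.sqrt (1/2) := Real.sqrt_nonneg _
        nlinarith
      have := Real.exp_le_one_iff.mpr hle
      linarith
    have hJ : J n μ ≤ C + 4 := by
      refine hkey.trans ?_
      exact add_le_add hterm1 hterm2
    have hone : 1 ≤ Real.sqrt 2 * a := by
      have h2 : Real.sqrt 2 ^ 2 = 2 := Real.sq_sqrt (by norm_num)
      nlinarith [Real.sqrt_nonneg 2, ha.le]
    have hone' : 1 ≤ (Real.sqrt 2 * K * (L / n)) ^ (2 * β) := by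
      have heq : Real.sqrt 2 * K * (L / n) = Real.sqrt 2 * a := by rw [hmulrw]; ring
      calc (1:ℝ) = 1 ^ (2 * β) := (Real.one_rpow _).symm
        _ ≤ (Real.sqrt 2 * K * (L / n)) ^ (2 * β) := by
            rw [heq]
            exact Real.rpow_le_rpow (by norm_num) hone h2β
    have hsplit : (Real.sqrt 2 * K * (L / n)) ^ (2 * β)
        = (Real.sqrt 2 * K) ^ (2 * β) * (L / n) ^ (2 * β) :=
      Real.mul_rpow (by positivity) hLn.le
    have hC4 : (0:ℝ) < C + 4 := by linarith
    calc J n μ ≤ C + 4 := hJ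
      _ = (C + 4) * 1 := by ring
      _ ≤ (C + 4) * ((Real.sqrt 2 * K) ^ (2 * β) * (L / n) ^ (2 * β)) := by
          rw [← hsplit]
          exact mul_le_mul_of_nonneg_left hone' hC4.le
      _ ≤ C' * (L / n) ^ (2 * β) := by
          have h1 : 0 ≤ C * K ^ (2 * β) * (L / n) ^ (2 * β) := by positivity
          have h2 : 0 ≤ (Real.log 2) ^ (-(2 * β)) * (L / n) ^ (2 * β) := by positivity
          have e1 : C' * (L / n) ^ (2 * β)
              = C * K ^ (2 * β) * (L / n) ^ (2 * β)
                + (Real.log 2) ^ (-(2 * β)) * (L / n) ^ (2 * β)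
                + (C + 4) * ((Real.sqrt 2 * K) ^ (2 * β) * (L / n) ^ (2 * β)) := by
            rw [hC'def]; ring
          linarith
end
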